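/- arXiv:2601.13102 — 4 statements merged into one kernel-verified Lean document; each statement's English description precedes it below -/
import Mathlib

section
/- Let H be a Hilbert space and let R_u, R_w : H → ℝ be functionals of the form R_u(f) = E_u(f) + λ‖f‖² and R_w(f) = E_w(f) + λ‖f‖², where E_u and E_w are convex and each difference E_u - E_w depends on f only through evaluation of f at a single point via a bounded linear functional L with ‖L‖ ≤ κ, and |(E_u - E_w)(f) - (E_u - E_w)(g)| ≤ (2ρ/(n+1))|L(f) - L(g)| for all f, g. If f_u minimizes R_u and f_w minimizes R_w, then ‖f_u - f_w‖ ≤ κρ/(λ(n+1)). -/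
lemma combo_norm {H : Type*} [NormedAddCommGroup H] [InnerProductSpace ℝ H]
    (a b : H) (t : ℝ) :
    ‖(1-t)•a + t•b‖^2 = (1-t)*‖a‖^2 + t*‖b‖^2 - t*(1-t)*‖a-b‖^2 := by
  simp only [← real_inner_self_eq_norm_sq]
  simp only [inner_add_add_self, inner_sub_sub_self, inner_smul_left, inner_smul_right,
    RCLike.conj_to_real, real_inner_comm a b]
  ring

lemma strong_min {H : Type*} [NormedAddCommGroup H] [InnerProductSpace ℝ H]
    (E : H → ℝ) (hE : ConvexOn ℝ Set.univ E) (lam : ℝ) (hlam : 0 < lam)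
    (f0 : H) (hf0 : ∀ f : H, E f0 + lam * ‖f0‖ ^ 2 ≤ E f + lam * ‖f‖ ^ 2) (g : H) :
    E f0 + lam * ‖f0‖ ^ 2 + lam * ‖f0 - g‖ ^ 2 ≤ E g + lam * ‖g‖ ^ 2 := by
  have key : ∀ t : ℝ, 0 < t → t < 1 →
      E f0 + lam * ‖f0‖ ^ 2 + lam * (1-t) * ‖f0 - g‖ ^ 2 ≤ E g + lam * ‖g‖ ^ 2 := by
    intro t ht ht1
    have h1 := hf0 ((1-t)•f0 + t•g)
    have h2 : E ((1-t)•f0 + t•g) ≤ (1-t) * E f0 + t * E g :=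
      hE.2 (Set.mem_univ f0) (Set.mem_univ g) (by linarith) (le_of_lt ht) (by ring)
    have h3 := combo_norm f0 g t
    rw [h3] at h1
    nlinarith
  rcases eq_or_lt_of_le (norm_nonneg (f0 - g)) with h | h
  · have : f0 - g = 0 := by rw [← norm_eq_zero, ← h]
    rw [← this.symm] at *
    simpa [← h] using hf0 g
  · have hq : 0 < ‖f0 - g‖ ^ 2 := by positivity
    refine le_of_forall_pos_le_add ?_
    intro ε hε
    set t := min (1/2) (ε / (lam * ‖f0 - g‖ ^ 2)) with htdef
    have ht0 : 0 < t := lt_min (by norm_num) (by positivity)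
    have ht1 : t < 1 := lt_of_le_of_lt (min_le_left _ _) (by norm_num)
    have hle : lam * t * ‖f0 - g‖ ^ 2 ≤ ε := by
      have : t ≤ ε / (lam * ‖f0 - g‖ ^ 2) := min_le_right _ _
      calc lam * t * ‖f0 - g‖ ^ 2 ≤ lam * (ε / (lam * ‖f0 - g‖ ^ 2)) * ‖f0 - g‖ ^ 2 := by
            gcongr
        _ = ε := by field_simp
    have := key t ht0 ht1
    nlinarith

theorem stmt_8 {H : Type*} [NormedAddCommGroup H] [InnerProductSpace ℝ H]
    (Eu Ew : H → ℝ) (hEu : ConvexOn ℝ Set.univ Eu) (hEw : ConvexOn ℝ Set.univ Ew)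
    (lam κ ρ : ℝ) (hlam : 0 < lam) (hκ : 0 < κ) (hρ : 0 < ρ) (n : ℕ)
    (L : H →L[ℝ] ℝ) (hL : ‖L‖ ≤ κ)
    (hD : ∀ f g : H, |(Eu f - Ew f) - (Eu g - Ew g)| ≤ (2 * ρ / (n + 1)) * |L f - L g|)
    (fu fw : H)
    (hfu : ∀ f : H, Eu fu + lam * ‖fu‖ ^ 2 ≤ Eu f + lam * ‖f‖ ^ 2)
    (hfw : ∀ f : H, Ew fw + lam * ‖fw‖ ^ 2 ≤ Ew f + lam * ‖f‖ ^ 2) :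
    ‖fu - fw‖ ≤ κ * ρ / (lam * (n + 1)) := by
  have h1 := strong_min Eu hEu lam hlam fu hfu fw
  have h2 := strong_min Ew hEw lam hlam fw hfw fu
  have hN : (0:ℝ) < (n:ℝ) + 1 := by positivity
  have hrev : ‖fw - fu‖ = ‖fu - fw‖ := norm_sub_rev _ _
  have hLb : |L fw - L fu| ≤ κ * ‖fu - fw‖ := by
    have : L fw - L fu = L (fw - fu) := by simp
    rw [this, ← Real.norm_eq_abs]
    calc ‖L (fw - fu)‖ ≤ ‖L‖ * ‖fw - fu‖ := L.le_opNorm _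
      _ ≤ κ * ‖fu - fw‖ := by rw [hrev]; gcongr
  have hkey : 2 * lam * ‖fu - fw‖ ^ 2 ≤ (2 * ρ / (n + 1)) * (κ * ‖fu - fw‖) := by
    have hd := hD fw fu
    have habs : (Eu fw - Ew fw) - (Eu fu - Ew fu) ≤ |(Eu fw - Ew fw) - (Eu fu - Ew fu)| :=
      le_abs_self _
    have hmul : (2 * ρ / (n + 1)) * |L fw - L fu| ≤ (2 * ρ / (n + 1)) * (κ * ‖fu - fw‖) := by
      gcongr
    rw [hrev] at h2
    nlinarith
  rcases eq_or_lt_of_le (norm_nonneg (fu - fw)) with h | h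
  · rw [← h]; positivity
  · rw [le_div_iff₀ (by positivity)]
    have e : 2 * ρ / (n + 1) * (κ * ‖fu - fw‖) * ((n:ℝ)+1) = 2 * ρ * κ * ‖fu - fw‖ := by
      field_simp
    nlinarith
end

section
/- Let a > 0 and ℓ(y,u) = a²(√(1 + ((y-u)/a)²) - 1) be the pseudo-Huber loss. Then the third derivative with respect to u satisfies |∂₂³ℓ(y,u)| ≤ (1/a)·(3/2)·(4/5)^{5/2} for all y, u, with equality attained at u = y ± a/2. -/
lemma rpow52_sq {x : ℝ} (hx : 0 ≤ x) : (x ^ ((5 : ℝ)/2)) ^ 2 = x ^ 5 := by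
  rw [← Real.rpow_natCast (x ^ ((5 : ℝ)/2)) 2, ← Real.rpow_mul hx,
    ← Real.rpow_natCast x 5]
  norm_num

lemma key_poly (x b : ℝ) (hx : 0 ≤ x) (hb : 0 ≤ b) :
    3125 * x * b ^ 4 ≤ 256 * (x + b) ^ 5 := by
  have h3 : 0 ≤ 16*x^3 + 88*b*x^2 + 203*b^2*x + 256*b^3 := by positivity
  nlinarith [mul_nonneg (sq_nonneg (4*x - b)) h3]

lemma main_ineq (a t : ℝ) (ha : 0 < a) :
    |3 * t / (a ^ 2 * (t ^ 2 / a ^ 2 + 1) ^ ((5 : ℝ) / 2))|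
      ≤ (1 / a) * (3 / 2) * ((4 : ℝ) / 5) ^ ((5 : ℝ) / 2) := by
  have hx : (0:ℝ) < t ^ 2 / a ^ 2 + 1 := by positivity
  have hP : (0:ℝ) < (t ^ 2 / a ^ 2 + 1) ^ ((5 : ℝ) / 2) :=
    Real.rpow_pos_of_pos hx _
  have hC : (0:ℝ) < ((4 : ℝ) / 5) ^ ((5 : ℝ) / 2) :=
    Real.rpow_pos_of_pos (by norm_num) _
  set P := (t ^ 2 / a ^ 2 + 1) ^ ((5 : ℝ) / 2) with hPdef
  set C := ((4 : ℝ) / 5) ^ ((5 : ℝ) / 2) with hCdef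
  rw [abs_div, abs_of_pos (by positivity : (0:ℝ) < a ^ 2 * P)]
  rw [div_le_iff₀ (by positivity)]
  have ha8 : (0:ℝ) < a ^ 8 := by positivity
  have key : 2 * |3 * t| ≤ 3 * (C * a * P) := by
    have h2 : (2 * |3 * t|) ^ 2 ≤ (3 * (C * a * P)) ^ 2 := by
      have hP2 : P ^ 2 = (t ^ 2 / a ^ 2 + 1) ^ 5 := rpow52_sq hx.le
      have hC2 : C ^ 2 = ((4:ℝ)/5) ^ 5 := rpow52_sq (by norm_num)
      have hkey := key_poly (t^2) (a^2) (sq_nonneg t) (sq_nonneg a)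
      have e1 : (2 * |3 * t|) ^ 2 = 36 * t ^ 2 := by
        rw [mul_pow, sq_abs]; ring
      have e2 : (3 * (C * a * P)) ^ 2 = 9 * (C ^ 2 * (a ^ 2 * P ^ 2)) := by ring
      have expand : (t ^ 2 / a ^ 2 + 1) ^ 5 = (t^2 + a^2)^5 / a^10 := by
        field_simp
      rw [e1, e2, hP2, hC2, expand,
        show (9:ℝ) * ((4/5)^5 * (a^2 * ((t^2+a^2)^5 / a^10)))
            = 9 * (4/5)^5 * (t^2+a^2)^5 / a^8 from by field_simp,
        le_div_iff₀ ha8]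
      nlinarith [hkey]
    have h1 : 0 ≤ 3 * (C * a * P) := by positivity
    nlinarith [abs_nonneg (3*t), h2, h1]
  calc |3 * t| ≤ (3/2) * (C * a * P) := by linarith
    _ = 1 / a * (3 / 2) * C * (a ^ 2 * P) := by field_simp

theorem stmt_14 (a : ℝ) (ha : 0 < a) :
    (∀ y u : ℝ,
      |3 * (y - u) / (a ^ 2 * ((y - u) ^ 2 / a ^ 2 + 1) ^ ((5 : ℝ) / 2))|
        ≤ (1 / a) * (3 / 2) * ((4 : ℝ) / 5) ^ ((5 : ℝ) / 2)) ∧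
    (∀ y : ℝ,
      |3 * (y - (y - a / 2)) / (a ^ 2 * ((y - (y - a / 2)) ^ 2 / a ^ 2 + 1) ^ ((5 : ℝ) / 2))|
        = (1 / a) * (3 / 2) * ((4 : ℝ) / 5) ^ ((5 : ℝ) / 2) ∧
      |3 * (y - (y + a / 2)) / (a ^ 2 * ((y - (y + a / 2)) ^ 2 / a ^ 2 + 1) ^ ((5 : ℝ) / 2))|
        = (1 / a) * (3 / 2) * ((4 : ℝ) / 5) ^ ((5 : ℝ) / 2)) := by
  have hC : (0:ℝ) < ((4 : ℝ) / 5) ^ ((5 : ℝ) / 2) :=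
    Real.rpow_pos_of_pos (by norm_num) _
  set C := ((4 : ℝ) / 5) ^ ((5 : ℝ) / 2) with hCdef
  have hCne : C ≠ 0 := ne_of_gt hC
  constructor
  · intro y u; exact main_ineq a (y - u) ha
  · intro y
    have hsimp1 : y - (y - a / 2) = a / 2 := by ring
    have hsimp2 : y - (y + a / 2) = -(a / 2) := by ring
    have harg : (a/2) ^ 2 / a ^ 2 + 1 = (5:ℝ)/4 := by
      field_simp; ring
    have hinv : ((5:ℝ)/4) ^ ((5:ℝ)/2) = C⁻¹ := by
      rw [show (5:ℝ)/4 = ((4:ℝ)/5)⁻¹ by norm_num,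
        Real.inv_rpow (by norm_num : (0:ℝ) ≤ 4/5)]
    have hval : |3 * (a/2) / (a ^ 2 * C⁻¹)| = 1 / a * (3/2) * C := by
      rw [abs_div, abs_of_pos (by positivity : (0:ℝ) < a ^ 2 * C⁻¹),
        abs_of_pos (by positivity : (0:ℝ) < 3 * (a/2))]
      field_simp
    constructor
    · rw [hsimp1, harg, hinv, hval]
    · rw [hsimp2, show (-(a/2))^2 = (a/2)^2 by ring, harg, hinv,
        show (3:ℝ) * -(a/2) / (a ^ 2 * C⁻¹) = -(3 * (a/2) / (a ^ 2 * C⁻¹)) by ring,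
        abs_neg, hval]
end

section
/- Let a > 0 and t ∈ (0,1), and ℓ(y,u) = t(y-u) + a·log(1 + e^{-(y-u)/a}). Then the third derivative with respect to u satisfies |∂₂³ℓ(y,u)| ≤ (1/a²)·(5 + 3√3)/(√3 + 3)³ for all y, u, with the bound attained at u = y - a·ln(√3 + 2) and u = y - a·ln(2 - √3). -/
open Real

lemma s3_sq : Real.sqrt 3 ^ 2 = 3 := Real.sq_sqrt (by norm_num)
lemma s3_pos : (0:ℝ) < Real.sqrt 3 := Real.sqrt_pos.2 (by norm_num)

lemma aux_key (x : ℝ) (hx : 0 < x) :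
    |(x - 1) * x| ≤ (5 + 3 * Real.sqrt 3) / (Real.sqrt 3 + 3) ^ 3 * (x + 1) ^ 3 := by
  set s := Real.sqrt 3 with hs
  have hs2 : s ^ 2 = 3 := s3_sq
  have hs0 : (0:ℝ) < s := s3_pos
  have hs4 : 4 * s < 7 := by nlinarith
  have hd : (0:ℝ) < (s + 3) ^ 3 := by positivity
  rw [abs_le]
  constructor
  · rw [div_mul_eq_mul_div, neg_le, le_div_iff₀ hd]
    have hid : (5+3*s)*(x+1)^3 + ((x-1)*x)*(s+3)^3
        = (5+3*s)*(x-(2-s))^2*(x+7+4*s) := by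
      linear_combination (-12*s^2 + x^2*s - 28*x*s + 7*s - 9*x^2 - 36*x + 45) * hs2
    nlinarith [mul_nonneg (mul_nonneg (sq_nonneg (x - (2 - s))) (by nlinarith : (0:ℝ) ≤ 5 + 3*s)) (by nlinarith : (0:ℝ) ≤ x + 7 + 4*s), hid]
  · rw [div_mul_eq_mul_div, le_div_iff₀ hd]
    have hid : (5+3*s)*(x+1)^3 - ((x-1)*x)*(s+3)^3
        = (5+3*s)*(x-(2+s))^2*(x+7-4*s) := by
      linear_combination (12*s^2 - x^2*s - 26*x*s + 47*s + 9*x^2 - 54*x + 45) * hs2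
    nlinarith [mul_nonneg (mul_nonneg (sq_nonneg (x - (2 + s))) (by nlinarith : (0:ℝ) ≤ 5 + 3*s)) (by nlinarith : (0:ℝ) ≤ x + 7 - 4*s), hid]

theorem stmt_17 (a t : ℝ) (ha : 0 < a) (ht0 : 0 < t) (ht1 : t < 1) :
    (∀ y u : ℝ,
      |(Real.exp ((y - u) / a) - 1) * Real.exp ((y - u) / a) /
          (a ^ 2 * (Real.exp ((y - u) / a) + 1) ^ 3)|
        ≤ (1 / a ^ 2) * (5 + 3 * Real.sqrt 3) / (Real.sqrt 3 + 3) ^ 3) ∧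
    (∀ y : ℝ,
      |(Real.exp ((y - (y - a * Real.log (Real.sqrt 3 + 2))) / a) - 1) *
          Real.exp ((y - (y - a * Real.log (Real.sqrt 3 + 2))) / a) /
          (a ^ 2 * (Real.exp ((y - (y - a * Real.log (Real.sqrt 3 + 2))) / a) + 1) ^ 3)|
        = (1 / a ^ 2) * (5 + 3 * Real.sqrt 3) / (Real.sqrt 3 + 3) ^ 3 ∧
      |(Real.exp ((y - (y - a * Real.log (2 - Real.sqrt 3))) / a) - 1) *
          Real.exp ((y - (y - a * Real.log (2 - Real.sqrt 3))) / a) /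
          (a ^ 2 * (Real.exp ((y - (y - a * Real.log (2 - Real.sqrt 3))) / a) + 1) ^ 3)|
        = (1 / a ^ 2) * (5 + 3 * Real.sqrt 3) / (Real.sqrt 3 + 3) ^ 3) := by
  have hs2 : Real.sqrt 3 ^ 2 = 3 := s3_sq
  have hs0 : (0:ℝ) < Real.sqrt 3 := s3_pos
  have hs23 : Real.sqrt 3 < 2 := by nlinarith
  have ha2 : (0:ℝ) < a ^ 2 := by positivity
  have harg : ∀ c : ℝ, (y : ℝ) → (y - (y - a * Real.log c)) / a = Real.log c := by
    intro c y
    field_simp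
    ring
  constructor
  · intro y u
    set x := Real.exp ((y - u) / a) with hx
    have hxp : 0 < x := Real.exp_pos _
    have hd : (0:ℝ) < a ^ 2 * (x + 1) ^ 3 := by positivity
    rw [abs_div, abs_of_pos hd, div_le_iff₀ hd]
    have heq : (1 / a ^ 2) * (5 + 3 * Real.sqrt 3) / (Real.sqrt 3 + 3) ^ 3 * (a ^ 2 * (x + 1) ^ 3)
        = (5 + 3 * Real.sqrt 3) / (Real.sqrt 3 + 3) ^ 3 * (x + 1) ^ 3 := by
      field_simp
    rw [heq]
    exact aux_key x hxp
  · intro y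
    constructor
    · rw [harg, Real.exp_log (by linarith)]
      have hnum : (0:ℝ) < (Real.sqrt 3 + 2 - 1) * (Real.sqrt 3 + 2) := by nlinarith
      have hden : (0:ℝ) < a ^ 2 * (Real.sqrt 3 + 2 + 1) ^ 3 := by positivity
      rw [abs_of_pos (div_pos hnum hden)]
      field_simp
      ring_nf
      linear_combination (Real.sqrt 3 ^ 3 + 9 * Real.sqrt 3 ^ 2 + 27 * Real.sqrt 3 + 27) * hs2
    · rw [harg, Real.exp_log (by linarith)]
      have hnum : (2 - Real.sqrt 3 - 1) * (2 - Real.sqrt 3) < 0 := by nlinarith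
      have hb : (0:ℝ) < 2 - Real.sqrt 3 + 1 := by linarith
      have hden : (0:ℝ) < a ^ 2 * (2 - Real.sqrt 3 + 1) ^ 3 :=
        mul_pos ha2 (pow_pos hb 3)
      rw [abs_of_neg (div_neg_of_neg_of_pos hnum hden)]
      have h3 : (2 - Real.sqrt 3 + 1) ^ 3 ≠ 0 := ne_of_gt (pow_pos hb 3)
      field_simp
      ring_nf
      linear_combination (-Real.sqrt 3 ^ 3 - 3 * Real.sqrt 3 ^ 2 - 27 * Real.sqrt 3 + 63) * hs2
end

section
/- Fix reals Ỹ₁,…,Ỹ_{n+1}, Y₁,…,Y_n, a threshold T ≥ 0, and level α ∈ (0,1). Let i_{n,α} = ⌈(n+1)(1-α)⌉ and let |Y_{(i)} - Ỹ_{(i)}| denote the i-th smallest of the values |Y_i - Ỹ_i|, i = 1,…,n. Then the set {y ∈ ℝ : (1 + Σᵢ 𝟙{|Y_i - Ỹ_i| ≥ |y - Ỹ_{n+1}| - 2T})/(n+1) > α} is contained in the interval {y : |y - Ỹ_{n+1}| ≤ |Y_{(i_{n,α})} - Ỹ_{(i_{n,α})}| + 2T} (when i_{n,α} ≤ n). 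-/
open Finset

theorem stmt_18 (n : ℕ) (hn : 1 ≤ n) (Y Yt : ℕ → ℝ) (T α : ℝ)
    (hT : 0 ≤ T) (hα0 : 0 < α) (hα1 : α < 1)
    (i : ℕ) (hi : i = Nat.ceil ((n + 1 : ℝ) * (1 - α))) (hin : i ≤ n)
    (σ : Equiv.Perm (Fin n))
    (hσ : Monotone (fun k : Fin n => |Y (σ k) - Yt (σ k)|)) :
    {y : ℝ |
        α < (1 + ∑ j ∈ Finset.range n,
          (if |Y j - Yt j| ≥ |y - Yt n| - 2 * T then (1 : ℝ) else 0)) / (n + 1)}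
      ⊆ {y : ℝ |
          |y - Yt n| ≤
            |Y (σ ⟨i - 1, by omega⟩) - Yt (σ ⟨i - 1, by omega⟩)| + 2 * T} := by
  intro y hy
  simp only [Set.mem_setOf_eq] at hy ⊢
  by_contra h
  push_neg at h
  set t := |y - Yt n| - 2 * T with ht
  set q := |Y (σ ⟨i - 1, by omega⟩) - Yt (σ ⟨i - 1, by omega⟩)| with hqdef
  have hqt : q < t := by rw [ht]; linarith
  -- i ≥ 1
  have hi1 : 1 ≤ i := by
    rw [hi]
    have : (0:ℝ) < (n + 1 : ℝ) * (1 - α) := by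
      apply mul_pos <;> [positivity; linarith]
    exact Nat.one_le_ceil_iff.mpr this
  -- rewrite sum over range n as sum over Fin n composed with σ
  have hsum : (∑ j ∈ Finset.range n,
      (if |Y j - Yt j| ≥ t then (1 : ℝ) else 0))
      = ∑ k : Fin n, (if |Y (σ k) - Yt (σ k)| ≥ t then (1 : ℝ) else 0) := by
    rw [← Fin.sum_univ_eq_sum_range]
    exact (Equiv.sum_comp σ _).symm
  have hbound : (∑ k : Fin n, (if |Y (σ k) - Yt (σ k)| ≥ t then (1 : ℝ) else 0))
      ≤ ∑ k : Fin n, (if i ≤ (k : ℕ) then (1 : ℝ) else 0) := by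
    apply Finset.sum_le_sum
    intro k _
    by_cases hk : |Y (σ k) - Yt (σ k)| ≥ t
    · by_cases hki : i ≤ (k : ℕ)
      · simp [hk, hki]
      · exfalso
        have hkle : k ≤ (⟨i - 1, by omega⟩ : Fin n) := by
          simp [Fin.le_def]; omega
        have := hσ hkle
        simp only at this
        exact absurd (le_trans hk this) (not_le.mpr hqt)
    · simp [hk]
      split <;> norm_num
  have hcount : (∑ k : Fin n, (if i ≤ (k : ℕ) then (1 : ℝ) else 0)) = (n - i : ℕ) := by
    rw [Fin.sum_univ_eq_sum_range (fun j => if i ≤ j then (1:ℝ) else 0)]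
    rw [Finset.sum_ite, Finset.sum_const, Finset.sum_const]
    have : (Finset.range n).filter (fun j => i ≤ j) = Finset.Ico i n := by
      ext j; simp [and_comm]
    rw [this]
    simp [Nat.card_Ico]
  -- ceil property
  have hceil : (n + 1 : ℝ) * (1 - α) ≤ i := by
    rw [hi]; exact Nat.le_ceil _
  have hni : ((n - i : ℕ) : ℝ) = (n : ℝ) - i := by
    push_cast [Nat.cast_sub hin]; ring
  have hfin : (1 + ∑ j ∈ Finset.range n,
      (if |Y j - Yt j| ≥ t then (1 : ℝ) else 0)) / (n + 1) ≤ α := by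
    rw [div_le_iff₀ (by positivity)]
    rw [hsum]
    calc 1 + ∑ k : Fin n, (if |Y (σ k) - Yt (σ k)| ≥ t then (1 : ℝ) else 0)
        ≤ 1 + ((n - i : ℕ) : ℝ) := by rw [← hcount]; linarith [hbound]
      _ = 1 + (n : ℝ) - i := by rw [hni]; ring
      _ ≤ α * (n + 1) := by nlinarith [hceil]
  exact absurd hy (not_lt.mpr hfin)
end
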